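/- For the game CSG({1,...,N}) with N ≥ 3, let S(1^t) denote the star with a central vertex and t leaves, and let u be its central vertex. Then for all k ≥ 0, the Grundy value of the graph obtained by appending a path of k vertices to u equals the Grundy value of the graph obtained by appending a path of k mod (N+1) vertices to u. In particular, the Grundy sequence in k is purely periodic with period N+1. -/

import Mathlib

open SimpleGraph

/-- The minimum excludant of a set of naturals. -/
noncomputable def mex (s : Set ℕ) : ℕ := sInf {n | n ∉ s}

/-- The graph induced on a set of vertices is connected. -/
def ConnOn {V : Type*} (G : SimpleGraph V) (s : Set V) : Prop := (G.induce s).Connected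

/-- A legal move in the connected subtraction game CSG(L) on the graph `G`:
from remaining vertex set `s`, remove the (nonempty) connected set `s \ t` whose
cardinality lies in `L`, leaving `t`, which must be empty or induce a connected graph. -/
def CsgMove {V : Type*} [DecidableEq V] (G : SimpleGraph V) (L : Set ℕ)
    (s t : Finset V) : Prop :=
  t ⊆ s ∧ (s \ t).Nonempty ∧ (s \ t).card ∈ L ∧
    ConnOn G (↑(s \ t) : Set V) ∧ (t = ∅ ∨ ConnOn G (↑t : Set V))

/-- The Grundy value of the position with remaining vertex set `s` in the game
CSG(L) played on `G`, defined by the mex recursion over all legal moves. -/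
noncomputable def csgGrundy {V : Type*} [DecidableEq V] (G : SimpleGraph V) (L : Set ℕ)
    (s : Finset V) : ℕ :=
  mex (Set.range fun t : {t : Finset V // CsgMove G L s t} =>
    have : t.1.card < s.card := by
      obtain ⟨x, hx⟩ := t.2.2.1
      rw [Finset.mem_sdiff] at hx
      exact Finset.card_lt_card ((Finset.ssubset_iff_of_subset t.2.1).2 ⟨x, hx.1, hx.2⟩)
    csgGrundy G L t.1)
termination_by s.card
decreasing_by exact this

/-- The subdivided star with `t` branches of lengths `l 0, …, l (t-1)` appended
to a central vertex `none`. -/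
def subdividedStar {t : ℕ} (l : Fin t → ℕ) :
    SimpleGraph (Option (Σ i : Fin t, Fin (l i))) :=
  SimpleGraph.fromRel fun a b =>
    match a, b with
    | none, some ⟨_, j⟩ => (j : ℕ) = 0
    | some ⟨i, j⟩, some ⟨i', j'⟩ => (i : ℕ) = (i' : ℕ) ∧ (j : ℕ) + 1 = (j' : ℕ)
    | _, _ => False

/-- The graph `G` with a path on `k` new vertices appended at the vertex `u`. -/
def appendPath {V : Type*} (G : SimpleGraph V) (u : V) (k : ℕ) :
    SimpleGraph (V ⊕ Fin k) :=
  SimpleGraph.fromRel fun a b =>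
    match a, b with
    | Sum.inl x, Sum.inl y => G.Adj x y
    | Sum.inl x, Sum.inr j => x = u ∧ (j : ℕ) = 0
    | Sum.inr j, Sum.inr j' => (j : ℕ) + 1 = (j' : ℕ)
    | _, _ => False


/-! ### mex lemmas -/

lemma mex_le {s : Set ℕ} {n : ℕ} (h : n ∉ s) : mex s ≤ n := Nat.sInf_le h

lemma mem_of_lt_mex {s : Set ℕ} {v : ℕ} (h : v < mex s) : v ∈ s := by
  by_contra hv
  exact absurd (mex_le hv) (not_le.2 h)

lemma mex_notMem {s : Set ℕ} (h : ∃ n, n ∉ s) : mex s ∉ s :=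
  Nat.sInf_mem h

lemma mex_eq {s : Set ℕ} {g : ℕ} (h1 : g ∉ s) (h2 : ∀ v < g, v ∈ s) : mex s = g := by
  refine le_antisymm (mex_le h1) ?_
  by_contra hlt
  exact absurd (h2 _ (not_le.1 hlt)) (mex_notMem ⟨g, h1⟩)

lemma mex_congr {s s' : Set ℕ} (h1 : s ⊆ s') (h2 : mex s ∉ s') : mex s' = mex s :=
  mex_eq h2 fun v hv => h1 (mem_of_lt_mex hv)

/-! ### The abstract game -/

/-- Abstract positions: `pos a j` is the star center with `a` leaves and a tail
of `j` path vertices; `path m` is a bare path with `m` vertices. -/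
inductive AState : Type
  | pos (a j : ℕ) : AState
  | path (m : ℕ) : AState
deriving DecidableEq

namespace AState

def size : AState → ℕ
  | .pos a j => a + j + 1
  | .path m => m

end AState

/-- Abstract moves of CSG({1,…,N}) on the spider. -/
inductive AMove (N : ℕ) : AState → AState → Prop
  | tail (a j r : ℕ) : 1 ≤ r → r ≤ N → r ≤ j → AMove N (.pos a j) (.pos a (j - r))
  | leaf (a j : ℕ) : AMove N (.pos (a + 1) j) (.pos a j)
  | clear (a j p : ℕ) : p ≤ j → a + p + 1 ≤ N → AMove N (.pos a j) (.path (j - p))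
  | single (a j : ℕ) : a + 1 + j ≤ N → AMove N (.pos (a + 1) j) (.path 1)
  | pmove (m r : ℕ) : 1 ≤ r → r ≤ N → r ≤ m → AMove N (.path m) (.path (m - r))

lemma AMove.size_lt {N : ℕ} {σ τ : AState} (h : AMove N σ τ) : τ.size < σ.size := by
  cases h <;> simp [AState.size] <;> omega

/-- Abstract Grundy value. -/
noncomputable def aG (N : ℕ) (σ : AState) : ℕ :=
  mex (Set.range fun τ : {τ : AState // AMove N σ τ} =>
    have : τ.1.size < σ.size := τ.2.size_lt
    aG N τ.1)
termination_by σ.size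
decreasing_by exact this

/-- The set of Grundy values of options. -/
def AOpt (N : ℕ) (σ : AState) : Set ℕ := aG N '' {τ | AMove N σ τ}

lemma aG_eq (N : ℕ) (σ : AState) : aG N σ = mex (AOpt N σ) := by
  rw [aG]
  congr 1
  ext v
  constructor
  · rintro ⟨⟨τ, hτ⟩, rfl⟩; exact ⟨τ, hτ, rfl⟩
  · rintro ⟨τ, hτ, rfl⟩; exact ⟨⟨τ, hτ⟩, rfl⟩

lemma aG_le_size (N : ℕ) (σ : AState) : aG N σ ≤ σ.size := by
  rw [aG_eq]
  apply mex_le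
  rintro ⟨τ, hτ, hv⟩
  have := aG_le_size N τ
  have := hτ.size_lt
  omega
termination_by σ.size
decreasing_by exact hτ.size_lt

lemma aG_notMem_AOpt (N : ℕ) (σ : AState) : aG N σ ∉ AOpt N σ := by
  rw [aG_eq]
  apply mex_notMem
  refine ⟨σ.size, ?_⟩
  rintro ⟨τ, hτ, hv⟩
  have := aG_le_size N τ
  have := hτ.size_lt
  omega

lemma mem_AOpt {N : ℕ} {σ τ : AState} (h : AMove N σ τ) : aG N τ ∈ AOpt N σ :=
  ⟨τ, h, rfl⟩

lemma aG_ne_of_move {N : ℕ} {σ τ : AState} (h : AMove N σ τ) : aG N σ ≠ aG N τ :=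
  fun he => aG_notMem_AOpt N σ (he ▸ mem_AOpt h)

/-! ### Values of the abstract game -/

section Values

variable {N : ℕ}

lemma aG_path (hN : 1 ≤ N) : ∀ n, aG N (.path n) = n % (N + 1) := by
  intro n
  induction n using Nat.strong_induction_on with
  | _ n ih =>
  rw [aG_eq]
  apply mex_eq
  · rintro ⟨τ, hτ, hv⟩
    cases hτ with
    | pmove m r h1 h2 h3 =>
      rw [ih (n - r) (by omega)] at hv
      have hmod : (n : ℕ) - r ≡ n [MOD N + 1] := hv
      rw [Nat.modEq_iff_dvd' (by omega)] at hmod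
      have hr : n - (n - r) = r := by omega
      rw [hr] at hmod
      obtain ⟨c, hc⟩ := hmod
      cases c with
      | zero => omega
      | succ c => have := Nat.le_mul_of_pos_right (N+1) (show 0 < c+1 by omega); omega
  · intro v hv
    have hvle : n % (N + 1) ≤ n := Nat.mod_le _ _
    have hlt : n % (N+1) < N + 1 := Nat.mod_lt n (by omega)
    refine ⟨.path (n - (n % (N + 1) - v)), AMove.pmove n (n % (N+1) - v) (by omega)
      (by omega) (by omega), ?_⟩
    rw [ih _ (by omega)]
    have hmd := Nat.mod_add_div n (N+1)
    have h1 : n - (n % (N+1) - v) = v + (N + 1) * (n / (N+1)) := by omega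
    rw [h1, Nat.add_mul_mod_self_left, Nat.mod_eq_of_lt (by omega)]

/-- A nonempty position of size at most `N` has positive Grundy value. -/
lemma aG_pos (hN : 1 ≤ N) {σ : AState} (h1 : 1 ≤ σ.size) (h2 : σ.size ≤ N) :
    1 ≤ aG N σ := by
  have h0 : (0 : ℕ) ∈ AOpt N σ := by
    cases σ with
    | pos a j =>
      refine ⟨.path (j - j), AMove.clear a j j le_rfl (by simp [AState.size] at h2; omega), ?_⟩
      simp [aG_path hN]
    | path m =>
      refine ⟨.path (m - m), AMove.pmove m m (by simpa [AState.size] using h1)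
        (by simpa [AState.size] using h2) le_rfl, ?_⟩
      simp [aG_path hN]
  by_contra hc
  have h00 : aG N σ = 0 := by omega
  exact aG_notMem_AOpt N σ (h00 ▸ h0)

/-- A position of size between 2 and `N` has Grundy value at least 2. -/
lemma aG_ge_two (hN : 1 ≤ N) {σ : AState} (h1 : 2 ≤ σ.size) (h2 : σ.size ≤ N) :
    2 ≤ aG N σ := by
  have h0 : (0 : ℕ) ∈ AOpt N σ := by
    cases σ with
    | pos a j =>
      refine ⟨.path (j - j), AMove.clear a j j le_rfl (by simp [AState.size] at h2; omega), ?_⟩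
      simp [aG_path hN]
    | path m =>
      refine ⟨.path (m - m), AMove.pmove m m (by simp [AState.size] at h1; omega)
        (by simpa [AState.size] using h2) le_rfl, ?_⟩
      simp [aG_path hN]
  have hone : (1 : ℕ) ∈ AOpt N σ := by
    cases σ with
    | pos a j =>
      simp only [AState.size] at h1 h2
      cases a with
      | zero =>
        refine ⟨.path (j - (j-1)), AMove.clear 0 j (j-1) (by omega) (by omega), ?_⟩
        rw [aG_path hN]
        have : j - (j - 1) = 1 := by omega
        rw [this, Nat.mod_eq_of_lt (by omega)]
      | succ a =>
        refine ⟨.path 1, AMove.single a j (by omega), ?_⟩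
        rw [aG_path hN, Nat.mod_eq_of_lt (by omega)]
    | path m =>
      simp only [AState.size] at h1 h2
      refine ⟨.path (m - (m-1)), AMove.pmove m (m-1) (by omega) (by omega) (by omega), ?_⟩
      rw [aG_path hN]
      have : m - (m - 1) = 1 := by omega
      rw [this, Nat.mod_eq_of_lt (by omega)]
  by_contra hc
  have : aG N σ = 0 ∨ aG N σ = 1 := by omega
  rcases this with h00 | h00
  · exact aG_notMem_AOpt N σ (h00 ▸ h0)
  · exact aG_notMem_AOpt N σ (h00 ▸ hone)

/-- A position of size exactly `N + 1` has Grundy value 0. -/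
lemma aG_size_succ (hN : 1 ≤ N) {σ : AState} (h : σ.size = N + 1) : aG N σ = 0 := by
  rw [aG_eq]
  apply mex_eq
  · rintro ⟨τ, hτ, hv⟩
    have hlt := hτ.size_lt
    have h1 : 1 ≤ τ.size := by
      cases hτ with
      | tail a j r hr1 hr2 hr3 => simp [AState.size]
      | leaf a j => simp [AState.size]
      | clear a j p hp hle => simp only [AState.size] at h ⊢; omega
      | single a j hle => simp [AState.size]
      | pmove m r hr1 hr2 hr3 => simp only [AState.size] at h ⊢; omega
    have := aG_pos hN h1 (by omega)
    omega
  · intro v hv; omega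

/-- A position `pos a j` of size exactly `N + 2` with `a, j ≥ 1` has Grundy value 1. -/
lemma aG_size_two (hN : 1 ≤ N) {a j : ℕ} (ha : 1 ≤ a) (hj : 1 ≤ j)
    (h : a + j = N + 1) : aG N (.pos a j) = 1 := by
  rw [aG_eq]
  apply mex_eq
  · rintro ⟨τ, hτ, hv⟩
    cases hτ with
    | tail a j r hr1 hr2 hr3 =>
      rcases Nat.lt_or_ge r 2 with hr | hr
      · have : r = 1 := by omega
        subst this
        rw [aG_size_succ hN (by simp [AState.size]; omega)] at hv
        omega
      · have := aG_ge_two hN (σ := .pos a (j - r)) (by simp [AState.size]; omega)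
          (by simp [AState.size]; omega)
        omega
    | leaf a j =>
      rw [aG_size_succ hN (by simp [AState.size]; omega)] at hv
      omega
    | clear a j p hp hle =>
      rw [aG_path hN] at hv
      rw [Nat.mod_eq_of_lt (by omega)] at hv
      omega
    | single a j hle => omega
  · intro v hv
    have : v = 0 := by omega
    subst this
    refine ⟨.pos a (j - 1), AMove.tail a j 1 le_rfl hN hj, ?_⟩
    exact aG_size_succ hN (by simp [AState.size]; omega)

/-- Pure periodicity of the abstract Grundy values with period `N + 1`. -/
lemma aG_per (hN : 3 ≤ N) : ∀ a j : ℕ, aG N (.pos a (j + (N + 1))) = aG N (.pos a j) := by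
  have hN1 : 1 ≤ N := by omega
  suffices H : ∀ n a j : ℕ, a + j = n → aG N (.pos a (j + (N + 1))) = aG N (.pos a j) by
    exact fun a j => H (a + j) a j rfl
  intro n
  induction n using Nat.strong_induction_on with
  | _ n ih =>
  rintro a j rfl
  have hsub : AOpt N (.pos a j) ⊆ AOpt N (.pos a (j + (N + 1))) := by
    rintro v ⟨τ, hτ, rfl⟩
    cases hτ with
    | tail a j r hr1 hr2 hr3 =>
      refine ⟨.pos a (j + (N+1) - r), AMove.tail a (j + (N+1)) r hr1 hr2 (by omega), ?_⟩
      have he : j + (N+1) - r = (j - r) + (N + 1) := by omega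
      rw [he, ih (a + (j - r)) (by omega) a (j - r) rfl]
    | leaf a j =>
      refine ⟨.pos a (j + (N+1)), AMove.leaf a (j + (N+1)), ?_⟩
      exact ih (a + j) (by omega) a j rfl
    | clear a j p hp hle =>
      refine ⟨.path (j + (N+1) - p), AMove.clear a (j + (N+1)) p (by omega) hle, ?_⟩
      rw [aG_path hN1, aG_path hN1]
      have he : j + (N+1) - p = (j - p) + (N + 1) := by omega
      rw [he, Nat.add_mod_right]
    | single a j hle =>
      refine ⟨.pos (a+1) (j + (N+1) - (a+1+j)),
        AMove.tail (a+1) (j + (N+1)) (a+1+j) (by omega) (by omega) (by omega), ?_⟩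
      rw [aG_path hN1, Nat.mod_eq_of_lt (by omega)]
      exact aG_size_two hN1 (by omega) (by omega) (by omega)
  have hmem : aG N (.pos a j) ∉ AOpt N (.pos a (j + (N + 1))) := by
    rintro ⟨τ, hτ, hv⟩
    cases hτ with
    | tail a j' r hr1 hr2 hr3 =>
      -- here j' = j + (N+1); target is pos a (j + d) with d = N+1-r ∈ [1, N]
      have hd : j + (N+1) - r = j + (N+1-r) := by omega
      rw [hd] at hv
      have hmv := AMove.tail (N := N) a (j + (N+1-r)) (N+1-r) (by omega) (by omega) (by omega)
      have h2 : j + (N+1-r) - (N+1-r) = j := by omega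
      rw [h2] at hmv
      exact aG_ne_of_move hmv hv
    | leaf a j' =>
      rw [ih (a + j) (by omega) a j rfl] at hv
      exact aG_notMem_AOpt N (.pos (a+1) j) ⟨.pos a j, AMove.leaf a j, hv⟩
    | clear a j' p hp hle =>
      rw [aG_path hN1] at hv
      rcases le_or_gt p j with hpj | hpj
      · have he : j + (N+1) - p = (j - p) + (N + 1) := by omega
        rw [he, Nat.add_mod_right] at hv
        refine aG_notMem_AOpt N (.pos a j) ⟨.path (j - p), AMove.clear a j p hpj hle, ?_⟩
        rw [aG_path hN1]; exact hv
      · have hlt : j + (N+1) - p < N + 1 := by omega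
        rw [Nat.mod_eq_of_lt hlt] at hv
        have := aG_le_size N (.pos a j)
        simp only [AState.size] at this
        omega
    | single a j' hle => omega
  rw [aG_eq, aG_eq (σ := AState.pos a j)]
  exact mex_congr hsub (by rw [← aG_eq]; exact hmem)

/-- The abstract Grundy value only depends on `j` mod `N + 1`. -/
lemma aG_mod (hN : 3 ≤ N) (a j : ℕ) : aG N (.pos a j) = aG N (.pos a (j % (N + 1))) := by
  induction j using Nat.strong_induction_on with
  | _ j ih =>
  rcases Nat.lt_or_ge j (N + 1) with h | h
  · rw [Nat.mod_eq_of_lt h]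
  · have he : j = (j - (N+1)) + (N + 1) := by omega
    rw [he, aG_per hN, ih (j - (N+1)) (by omega), Nat.add_mod_right]

end Values

/-! ### The concrete graph -/

section Concrete

variable {tt kk : ℕ}

/-- Vertex type of the star with an appended path. -/
abbrev VV (tt kk : ℕ) := (Option (Σ _i : Fin tt, Fin 1)) ⊕ Fin kk

/-- The star with `tt` leaves and a path of `kk` vertices appended at the center. -/
abbrev GG (tt kk : ℕ) : SimpleGraph (VV tt kk) :=
  appendPath (subdividedStar fun _ : Fin tt => 1) none kk

lemma adj_iff (u v : VV tt kk) : (GG tt kk).Adj u v ↔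
    (u = Sum.inl none ∧ ∃ w, v = Sum.inl (some w)) ∨
    ((∃ w, u = Sum.inl (some w)) ∧ v = Sum.inl none) ∨
    (u = Sum.inl none ∧ ∃ x : Fin kk, v = Sum.inr x ∧ (x : ℕ) = 0) ∨
    (v = Sum.inl none ∧ ∃ x : Fin kk, u = Sum.inr x ∧ (x : ℕ) = 0) ∨
    (∃ x y : Fin kk, u = Sum.inr x ∧ v = Sum.inr y ∧
      ((x : ℕ) + 1 = (y : ℕ) ∨ (y : ℕ) + 1 = (x : ℕ))) := by
  cases u with
  | inl a =>
    cases v with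
    | inl b =>
      cases a <;> cases b <;>
        simp [appendPath, subdividedStar, SimpleGraph.fromRel_adj] <;> aesop
    | inr x =>
      cases a <;> simp [appendPath, SimpleGraph.fromRel_adj] <;> aesop
  | inr x =>
    cases v with
    | inl b =>
      cases b <;> simp [appendPath, SimpleGraph.fromRel_adj] <;> aesop
    | inr y =>
      simp only [appendPath, SimpleGraph.fromRel_adj]
      constructor
      · rintro ⟨hne, h | h⟩
        · exact Or.inr (Or.inr (Or.inr (Or.inr ⟨x, y, rfl, rfl, Or.inl h⟩)))
        · exact Or.inr (Or.inr (Or.inr (Or.inr ⟨x, y, rfl, rfl, Or.inr h⟩)))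
      · rintro (⟨h, _⟩ | ⟨⟨w, h⟩, _⟩ | ⟨h, _⟩ | ⟨h, _⟩ | ⟨x', y', hx, hy, h⟩)
        · exact absurd h (by simp)
        · exact absurd h (by simp)
        · exact absurd h (by simp)
        · exact absurd h (by simp)
        · cases hx; cases hy
          refine ⟨fun he => ?_, h⟩
          injection he with h2
          subst h2
          omega

/-! ### Connectivity tools -/

lemma adj_induce {V : Type*} {G : SimpleGraph V} {s : Set V} {a b : V}
    (ha : a ∈ s) (hb : b ∈ s) (h : G.Adj a b) : (G.induce s).Adj ⟨a, ha⟩ ⟨b, hb⟩ := h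

lemma reach_ind {V : Type*} {G : SimpleGraph V} {s : Set V} (P : V → Prop)
    (hP : ∀ a b : V, a ∈ s → b ∈ s → G.Adj a b → P a → P b) :
    ∀ {x y : ↥s}, (G.induce s).Reachable x y → P x.1 → P y.1 := by
  intro x y h hx
  obtain ⟨w⟩ := h
  induction w with
  | nil => exact hx
  | cons h' p ih => exact ih (hP _ _ (by exact Subtype.mem _) (by exact Subtype.mem _) h' hx)

lemma conn_of_hub {V : Type*} {G : SimpleGraph V} {s : Set V} (hub : V) (hhub : hub ∈ s)
    (h : ∀ v (hv : v ∈ s), (G.induce s).Reachable ⟨v, hv⟩ ⟨hub, hhub⟩) :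
    (G.induce s).Connected := by
  rw [SimpleGraph.connected_iff]
  exact ⟨fun a b => (h a.1 a.2).trans (h b.1 b.2).symm, ⟨⟨hub, hhub⟩⟩⟩

lemma connOn_singleton {V : Type*} (G : SimpleGraph V) (v : V) : ConnOn G {v} := by
  rw [ConnOn, SimpleGraph.connected_iff]
  refine ⟨fun a b => ?_, ⟨⟨v, rfl⟩⟩⟩
  have : a = b := Subtype.ext (by rw [a.2, b.2])
  rw [this]

/-- The path part of `s` is downward closed. -/
def dcl (s : Finset (VV tt kk)) : Prop :=
  ∀ x y : Fin kk, (y : ℕ) ≤ (x : ℕ) → Sum.inr x ∈ s → Sum.inr y ∈ s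

/-- The path part of `s` is an interval. -/
def itv (s : Finset (VV tt kk)) : Prop :=
  ∀ x y z : Fin kk, (x : ℕ) ≤ (y : ℕ) → (y : ℕ) ≤ (z : ℕ) →
    Sum.inr x ∈ s → Sum.inr z ∈ s → Sum.inr y ∈ s

lemma connOn_center {s : Finset (VV tt kk)} (hC : Sum.inl none ∈ s) (hdc : dcl s) :
    ConnOn (GG tt kk) ↑s := by
  have hC' : (Sum.inl none : VV tt kk) ∈ (↑s : Set (VV tt kk)) := hC
  apply conn_of_hub _ hC'
  have aux : ∀ n (x : Fin kk) (hx : Sum.inr x ∈ (↑s : Set (VV tt kk))), (x : ℕ) = n →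
      ((GG tt kk).induce ↑s).Reachable ⟨Sum.inr x, hx⟩ ⟨Sum.inl none, hC'⟩ := by
    intro n
    induction n with
    | zero =>
      intro x hx h0
      exact (adj_induce hx hC' ((adj_iff _ _).2 (Or.inr (Or.inr (Or.inr (Or.inl
        ⟨rfl, x, rfl, h0⟩)))))).reachable
    | succ n ih =>
      intro x hx hn
      have hnk : n < kk := by have := x.2; omega
      have hy : Sum.inr (⟨n, hnk⟩ : Fin kk) ∈ s := hdc x ⟨n, hnk⟩ (by simp; omega) hx
      refine ((adj_induce hx (show Sum.inr (⟨n, hnk⟩ : Fin kk) ∈ (↑s : Set (VV tt kk)) from hy)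
        ((adj_iff _ _).2 (Or.inr (Or.inr (Or.inr (Or.inr
          ⟨x, ⟨n, hnk⟩, rfl, rfl, Or.inr (by simp [hn])⟩)))))).reachable).trans ?_
      exact ih ⟨n, hnk⟩ hy rfl
  intro v hv
  match v with
  | Sum.inl none => exact SimpleGraph.Reachable.refl _
  | Sum.inl (some w) =>
    exact (adj_induce hv hC' ((adj_iff _ _).2 (Or.inr (Or.inl ⟨⟨w, rfl⟩, rfl⟩)))).reachable
  | Sum.inr x => exact aux (x : ℕ) x hv rfl

lemma reach_path {s : Finset (VV tt kk)} (hit : itv s) :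
    ∀ n (x y : Fin kk) (hx : Sum.inr x ∈ (↑s : Set (VV tt kk)))
      (hy : Sum.inr y ∈ (↑s : Set (VV tt kk))), (x : ℕ) ≤ y → (y : ℕ) - x = n →
      ((GG tt kk).induce ↑s).Reachable ⟨Sum.inr y, hy⟩ ⟨Sum.inr x, hx⟩ := by
  intro n
  induction n with
  | zero =>
    intro x y hx hy hle hn
    have : x = y := Fin.ext (by omega)
    subst this
    exact SimpleGraph.Reachable.refl _
  | succ n ih =>
    intro x y hx hy hle hn
    have hyk : (y : ℕ) - 1 < kk := by have := y.2; omega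
    have hzs : Sum.inr (⟨(y : ℕ) - 1, hyk⟩ : Fin kk) ∈ s :=
      hit x ⟨(y : ℕ) - 1, hyk⟩ y (show (x:ℕ) ≤ (y:ℕ)-1 by omega)
        (show (y:ℕ)-1 ≤ (y:ℕ) by omega) hx hy
    refine ((adj_induce hy (show Sum.inr (⟨(y : ℕ) - 1, hyk⟩ : Fin kk) ∈
        (↑s : Set (VV tt kk)) from hzs)
      ((adj_iff _ _).2 (Or.inr (Or.inr (Or.inr (Or.inr
        ⟨y, ⟨(y : ℕ) - 1, hyk⟩, rfl, rfl, Or.inr (show (y:ℕ)-1+1 = (y:ℕ) by omega)⟩)))))).reachable).trans ?_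
    exact ih x ⟨(y : ℕ) - 1, hyk⟩ hx hzs (show (x:ℕ) ≤ (y:ℕ)-1 by omega)
      (show (y:ℕ)-1-(x:ℕ) = n by omega)

lemma connOn_path {s : Finset (VV tt kk)} (hne : s.Nonempty)
    (hap : ∀ v ∈ s, ∃ x, v = Sum.inr x) (hit : itv s) : ConnOn (GG tt kk) ↑s := by
  obtain ⟨v0, hv0⟩ := hne
  obtain ⟨x0, rfl⟩ := hap v0 hv0
  have hx0 : Sum.inr x0 ∈ (↑s : Set (VV tt kk)) := hv0
  apply conn_of_hub _ hx0
  intro v hv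
  have hv' : v ∈ s := hv
  obtain ⟨x, rfl⟩ := hap v hv'
  rcases le_total (x : ℕ) (x0 : ℕ) with h | h
  · exact (reach_path hit _ x x0 hv hx0 h rfl).symm
  · exact reach_path hit _ x0 x hx0 hv h rfl

/-! ### Classification of connected positions -/

/-- The possible shapes of positions arising in play. -/
def GoodF (s : Finset (VV tt kk)) : Prop :=
  s = ∅ ∨ (Sum.inl none ∈ s ∧ dcl s) ∨ (∃ w, s = {Sum.inl (some w)}) ∨
    (s.Nonempty ∧ (∀ v ∈ s, ∃ x, v = Sum.inr x) ∧ itv s)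

lemma inr_mem_coe {s : Finset (VV tt kk)} {x : Fin kk} (h : Sum.inr x ∈ s) :
    Sum.inr x ∈ (↑s : Set (VV tt kk)) := h

lemma classify {s : Finset (VV tt kk)} (hc : ConnOn (GG tt kk) ↑s) : GoodF s := by
  rcases s.eq_empty_or_nonempty with rfl | hne
  · left; rfl
  by_cases hC : Sum.inl none ∈ s
  · refine Or.inr (Or.inl ⟨hC, ?_⟩)
    intro x y hyx hx
    by_contra hy
    have hxy : (y : ℕ) < (x : ℕ) := by
      rcases Nat.lt_or_ge (y : ℕ) (x : ℕ) with h | h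
      · exact h
      · have : y = x := Fin.ext (by omega)
        subst this; exact absurd hx hy
    have hinv : ∀ a b : VV tt kk, a ∈ (↑s : Set (VV tt kk)) → b ∈ (↑s : Set (VV tt kk)) →
        (GG tt kk).Adj a b → (∃ z : Fin kk, a = Sum.inr z ∧ (y : ℕ) < (z : ℕ)) →
        (∃ z : Fin kk, b = Sum.inr z ∧ (y : ℕ) < (z : ℕ)) := by
      rintro a b ha hb hadj ⟨z, rfl, hz⟩
      rcases (adj_iff _ _).1 hadj with ⟨h, _⟩ | ⟨⟨w, h⟩, _⟩ | ⟨h, _⟩ | ⟨hb', x', hx', h0⟩ |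
        ⟨x', y', hx', hy', hstep⟩
      · exact absurd h (by simp)
      · exact absurd h (by simp)
      · exact absurd h (by simp)
      · injection hx' with he; subst he; omega
      · injection hx' with he; subst he
        refine ⟨y', hy', ?_⟩
        rcases hstep with h | h
        · omega
        · rcases Nat.lt_or_ge (y : ℕ) (y' : ℕ) with h2 | h2
          · exact h2
          · exfalso
            have : y' = y := Fin.ext (by omega)
            subst this
            rw [hy'] at hb
            exact hy hb
    have key := reach_ind (G := GG tt kk) (s := (↑s : Set (VV tt kk))) _ hinv
      (hc.preconnected ⟨Sum.inr x, inr_mem_coe hx⟩ ⟨Sum.inl none, hC⟩) ⟨x, rfl, hxy⟩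
    obtain ⟨z, hz, _⟩ := key
    exact absurd hz (by simp)
  · by_cases hL : ∃ w, Sum.inl (some w) ∈ s
    · obtain ⟨w, hw⟩ := hL
      refine Or.inr (Or.inr (Or.inl ⟨w, ?_⟩))
      apply Finset.eq_singleton_iff_unique_mem.2
      refine ⟨hw, fun v hv => ?_⟩
      have hinv : ∀ a b : VV tt kk, a ∈ (↑s : Set (VV tt kk)) → b ∈ (↑s : Set (VV tt kk)) →
          (GG tt kk).Adj a b → a = Sum.inl (some w) → b = Sum.inl (some w) := by
        rintro a b ha hb hadj rfl
        rcases (adj_iff _ _).1 hadj with ⟨h, _⟩ | ⟨_, h⟩ | ⟨h, _⟩ | ⟨h, _⟩ | ⟨x', y', h, _⟩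
        · exact absurd h (by simp)
        · subst h; exact absurd hb hC
        · exact absurd h (by simp)
        · subst h; exact absurd hb hC
        · exact absurd h (by simp)
      exact reach_ind (G := GG tt kk) (s := (↑s : Set (VV tt kk))) _ hinv
        (hc.preconnected ⟨Sum.inl (some w), hw⟩ ⟨v, hv⟩) rfl
    · refine Or.inr (Or.inr (Or.inr ⟨hne, fun v hv => ?_, ?_⟩))
      · match v with
        | Sum.inl none => exact absurd hv hC
        | Sum.inl (some w) => exact absurd hv (fun h => hL ⟨w, h⟩)
        | Sum.inr x => exact ⟨x, rfl⟩
      · intro x y z hxy hyz hx hz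
        by_contra hy
        have h1 : (x : ℕ) < (y : ℕ) := by
          rcases Nat.lt_or_ge (x : ℕ) (y : ℕ) with h | h
          · exact h
          · have : y = x := Fin.ext (by omega)
            subst this; exact absurd hx hy
        have h2 : (y : ℕ) < (z : ℕ) := by
          rcases Nat.lt_or_ge (y : ℕ) (z : ℕ) with h | h
          · exact h
          · have : y = z := Fin.ext (by omega)
            subst this; exact absurd hz hy
        have hinv : ∀ a b : VV tt kk, a ∈ (↑s : Set (VV tt kk)) → b ∈ (↑s : Set (VV tt kk)) →
            (GG tt kk).Adj a b → (∃ u : Fin kk, a = Sum.inr u ∧ (y : ℕ) < (u : ℕ)) →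
            (∃ u : Fin kk, b = Sum.inr u ∧ (y : ℕ) < (u : ℕ)) := by
          rintro a b ha hb hadj ⟨u, rfl, hu⟩
          rcases (adj_iff _ _).1 hadj with ⟨h, _⟩ | ⟨⟨w, h⟩, _⟩ | ⟨h, _⟩ | ⟨hb', x', hx', h0⟩ |
            ⟨x', y', hx', hy', hstep⟩
          · exact absurd h (by simp)
          · exact absurd h (by simp)
          · exact absurd h (by simp)
          · subst hb'; exact absurd hb hC
          · injection hx' with he; subst he
            refine ⟨y', hy', ?_⟩
            rcases hstep with h | h
            · omega
            · rcases Nat.lt_or_ge (y : ℕ) (y' : ℕ) with h3 | h3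
              · exact h3
              · exfalso
                have : y' = y := Fin.ext (by omega)
                subst this
                rw [hy'] at hb
                exact hy hb
        have key := reach_ind (G := GG tt kk) (s := (↑s : Set (VV tt kk))) _ hinv
          (hc.preconnected ⟨Sum.inr z, inr_mem_coe hz⟩ ⟨Sum.inr x, inr_mem_coe hx⟩) ⟨z, rfl, h2⟩
        obtain ⟨u, hu, hu2⟩ := key
        injection hu with he
        subst he
        omega

/-! ### Counting -/

/-- Is a leaf vertex. -/
def isLb : VV tt kk → Bool
  | .inl (some _) => true
  | _ => false

/-- Is a path vertex. -/
def isPb : VV tt kk → Bool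
  | .inr _ => true
  | _ => false

/-- Path index. -/
def pval : VV tt kk → ℕ
  | .inr x => (x : ℕ)
  | _ => 0

/-- Number of leaves in a position. -/
def lcount (s : Finset (VV tt kk)) : ℕ := (s.filter (fun v => isLb v = true)).card

/-- Number of path vertices in a position. -/
def pcount (s : Finset (VV tt kk)) : ℕ := (s.filter (fun v => isPb v = true)).card

/-- Abstraction of a position. -/
def FF (s : Finset (VV tt kk)) : AState :=
  if Sum.inl none ∈ s then .pos (lcount s) (pcount s) else .path s.card

lemma isLb_iff (v : VV tt kk) : isLb v = true ↔ ∃ w, v = Sum.inl (some w) := by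
  match v with
  | .inl none => simp [isLb]
  | .inl (some w) => simp [isLb]
  | .inr x => simp [isLb]

lemma isPb_iff (v : VV tt kk) : isPb v = true ↔ ∃ x, v = Sum.inr x := by
  match v with
  | .inl none => simp [isPb]
  | .inl (some w) => simp [isPb]
  | .inr x => simp [isPb]

lemma card_decomp (s : Finset (VV tt kk)) :
    s.card = (if Sum.inl none ∈ s then 1 else 0) + lcount s + pcount s := by
  classical
  have h1 := Finset.card_filter_add_card_filter_not
    (s := s) (p := fun v => isPb v = true)
  have h2 := Finset.card_filter_add_card_filter_not
    (s := s.filter (fun v => ¬ isPb v = true)) (p := fun v => isLb v = true)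
  have e1 : (s.filter (fun v => ¬ isPb v = true)).filter (fun v => isLb v = true)
      = s.filter (fun v => isLb v = true) := by
    ext v
    simp only [Finset.mem_filter, and_assoc]
    constructor
    · rintro ⟨h, _, h3⟩; exact ⟨h, h3⟩
    · rintro ⟨h, h3⟩
      refine ⟨h, ?_, h3⟩
      rw [isLb_iff] at h3
      obtain ⟨w, rfl⟩ := h3
      simp [isPb]
  have e2 : (s.filter (fun v => ¬ isPb v = true)).filter (fun v => ¬ isLb v = true)
      = s.filter (fun v => v = Sum.inl none) := by
    ext v
    simp only [Finset.mem_filter, and_assoc]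
    constructor
    · rintro ⟨h, h2, h3⟩
      refine ⟨h, ?_⟩
      match v with
      | .inl none => rfl
      | .inl (some w) => simp [isLb] at h3
      | .inr x => simp [isPb] at h2
    · rintro ⟨h, rfl⟩
      exact ⟨h, by simp [isPb], by simp [isLb]⟩
  have e3 : s.filter (fun v => v = Sum.inl none) =
      if Sum.inl none ∈ s then {Sum.inl none} else ∅ := Finset.filter_eq' s _
  have e4 : (s.filter (fun v => v = Sum.inl none)).card
      = if Sum.inl none ∈ s then 1 else 0 := by
    rw [e3]
    split <;> simp
  rw [e1, e2, e4] at h2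
  unfold lcount pcount
  omega

lemma filter_split {s u : Finset (VV tt kk)} (h : u ⊆ s) (p : VV tt kk → Prop)
    [DecidablePred p] :
    ((s \ u).filter p).card + (u.filter p).card = (s.filter p).card := by
  have e : (s \ u).filter p = s.filter p \ u.filter p := by
    ext v
    simp only [Finset.mem_filter, Finset.mem_sdiff]
    tauto
  rw [e]
  exact Finset.card_sdiff_add_card_eq_card (Finset.filter_subset_filter _ h)

lemma lcount_sdiff {s u : Finset (VV tt kk)} (h : u ⊆ s) :
    lcount (s \ u) + lcount u = lcount s := filter_split h _

lemma pcount_sdiff {s u : Finset (VV tt kk)} (h : u ⊆ s) :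
    pcount (s \ u) + pcount u = pcount s := filter_split h _

lemma lcount_eq_zero {s : Finset (VV tt kk)} (h : ∀ v ∈ s, ∃ x, v = Sum.inr x) :
    lcount s = 0 := by
  rw [lcount, Finset.card_eq_zero, Finset.filter_eq_empty_iff]
  intro v hv
  obtain ⟨x, rfl⟩ := h v hv
  simp [isLb]

lemma not_center_mem {s : Finset (VV tt kk)} (h : ∀ v ∈ s, ∃ x, v = Sum.inr x) :
    Sum.inl none ∉ s := by
  intro hc
  obtain ⟨x, hx⟩ := h _ hc
  exact absurd hx (by simp)

lemma pcount_eq_card {s : Finset (VV tt kk)} (h : ∀ v ∈ s, ∃ x, v = Sum.inr x) :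
    pcount s = s.card := by
  rw [pcount]
  congr 1
  rw [Finset.filter_eq_self]
  intro v hv
  obtain ⟨x, rfl⟩ := h v hv
  simp [isPb]

lemma lcount_singleton (w : Σ _ : Fin tt, Fin 1) :
    lcount ({Sum.inl (some w)} : Finset (VV tt kk)) = 1 := by
  rw [lcount, Finset.filter_singleton]; simp [isLb]

lemma pcount_singleton (w : Σ _ : Fin tt, Fin 1) :
    pcount ({Sum.inl (some w)} : Finset (VV tt kk)) = 0 := by
  rw [pcount, Finset.filter_singleton]; simp [isPb]

lemma nat_dc {T : Finset ℕ} (h : ∀ m ∈ T, ∀ l, l ≤ m → l ∈ T) (m : ℕ) :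
    m ∈ T ↔ m < T.card := by
  constructor
  · intro hm
    by_contra hc
    push_neg at hc
    have hsub : Finset.range (m + 1) ⊆ T := fun l hl =>
      h m hm l (by simp at hl; omega)
    have := Finset.card_le_card hsub
    simp at this
    omega
  · intro hm
    by_contra hc
    have hsub : T ⊆ Finset.range m := by
      intro l hl
      simp only [Finset.mem_range]
      rcases Nat.lt_or_ge l m with h2 | h2
      · exact h2
      · exact absurd (h l hl m h2) hc
    have := Finset.card_le_card hsub
    simp at this
    omega

/-- The set of path indices of a position. -/
def pset (s : Finset (VV tt kk)) : Finset ℕ := (s.filter (fun v => isPb v = true)).image pval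

lemma mem_pset {s : Finset (VV tt kk)} (m : ℕ) :
    m ∈ pset s ↔ ∃ x : Fin kk, Sum.inr x ∈ s ∧ (x : ℕ) = m := by
  rw [pset]
  simp only [Finset.mem_image, Finset.mem_filter]
  constructor
  · rintro ⟨v, ⟨hv, hP⟩, rfl⟩
    rw [isPb_iff] at hP
    obtain ⟨x, rfl⟩ := hP
    exact ⟨x, hv, rfl⟩
  · rintro ⟨x, hx, rfl⟩
    exact ⟨Sum.inr x, ⟨hx, by simp [isPb]⟩, rfl⟩

lemma card_pset (s : Finset (VV tt kk)) : (pset s).card = pcount s := by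
  rw [pset, pcount]
  apply Finset.card_image_of_injOn
  intro v hv w hw he
  rw [Finset.mem_coe, Finset.mem_filter] at hv hw
  obtain ⟨x, rfl⟩ := (isPb_iff v).1 hv.2
  obtain ⟨y, rfl⟩ := (isPb_iff w).1 hw.2
  simp only [pval] at he
  exact congrArg Sum.inr (Fin.ext he)

lemma pcount_char {s : Finset (VV tt kk)} (hdc : dcl s) (x : Fin kk) :
    Sum.inr x ∈ s ↔ (x : ℕ) < pcount s := by
  rw [← card_pset]
  have hd : ∀ m ∈ pset s, ∀ l, l ≤ m → l ∈ pset s := by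
    intro m hm l hl
    rw [mem_pset] at hm ⊢
    obtain ⟨z, hz, rfl⟩ := hm
    have hlk : l < kk := by have := z.2; omega
    exact ⟨⟨l, hlk⟩, hdc z ⟨l, hlk⟩ hl hz, rfl⟩
  rw [← nat_dc hd]
  rw [mem_pset]
  constructor
  · intro h; exact ⟨x, h, rfl⟩
  · rintro ⟨x', hx', he⟩
    have : x' = x := Fin.ext he
    subst this; exact hx'

lemma pcount_eq {s : Finset (VV tt kk)} {c : ℕ}
    (h : ∀ x : Fin kk, Sum.inr x ∈ s ↔ (x : ℕ) < c) (hck : c ≤ kk) : pcount s = c := by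
  rw [← card_pset]
  have : pset s = Finset.range c := by
    ext m
    rw [mem_pset, Finset.mem_range]
    constructor
    · rintro ⟨x, hx, rfl⟩
      exact (h x).1 hx
    · intro hm
      have hmk : m < kk := by omega
      exact ⟨⟨m, hmk⟩, (h ⟨m, hmk⟩).2 hm, rfl⟩
  rw [this, Finset.card_range]

lemma pcount_le {s : Finset (VV tt kk)} : pcount s ≤ s.card :=
  Finset.card_le_card (Finset.filter_subset _ _)

lemma lcount_univ : lcount (Finset.univ : Finset (VV tt kk)) = tt := by
  rw [lcount]
  have : (Finset.univ : Finset (VV tt kk)).filter (fun v => isLb v = true)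
      = Finset.univ.image (fun w : Σ _ : Fin tt, Fin 1 => (Sum.inl (some w) : VV tt kk)) := by
    ext v
    simp only [Finset.mem_filter, Finset.mem_univ, true_and, Finset.mem_image, isLb_iff]
    constructor
    · rintro ⟨w, rfl⟩
      first
      | exact ⟨w, rfl⟩
      | exact ⟨w, Finset.mem_univ w, rfl⟩
    · rintro ⟨w, hw⟩
      first
      | exact hw ▸ ⟨w, rfl⟩
      | (obtain ⟨_, rfl⟩ := hw; exact ⟨w, rfl⟩)
  rw [this, Finset.card_image_of_injective _ (fun a b h => by
    injection h with h2; injection h2)]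
  simp

lemma pcount_univ : pcount (Finset.univ : Finset (VV tt kk)) = kk := by
  apply pcount_eq
  · intro x
    simp [x.2]
  · exact le_refl _

lemma pcount_le_kk {s : Finset (VV tt kk)} : pcount s ≤ kk := by
  rw [← card_pset]
  have : pset s ⊆ Finset.range kk := by
    intro m hm
    rw [mem_pset] at hm
    obtain ⟨x, _, rfl⟩ := hm
    simp [x.2]
  simpa using Finset.card_le_card this

/-! ### Concrete moves map to abstract moves -/

lemma move_amove {N : ℕ} {s u : Finset (VV tt kk)} (hg : GoodF s)
    (hm : CsgMove (GG tt kk) (Set.Icc 1 N) s u) : AMove N (FF s) (FF u) := by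
  obtain ⟨hsub, hne, hcard, hcd, hcu⟩ := hm
  rw [Set.mem_Icc] at hcard
  have hcards := Finset.card_sdiff_add_card_eq_card hsub
  have hl := lcount_sdiff hsub
  have hp := pcount_sdiff hsub
  have hdecs := card_decomp s
  have hdecd := card_decomp (s \ u)
  have hdecu := card_decomp u
  rcases hg with rfl | ⟨hC, hdc⟩ | ⟨w, rfl⟩ | ⟨hne', hap, hit⟩
  · simp at hne
  · -- s contains the center
    have hgd := classify hcd
    by_cases hCu : Sum.inl none ∈ u
    · have hCd : Sum.inl none ∉ s \ u := by simp [hCu]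
      rcases hgd with hd | ⟨hCd', _⟩ | ⟨w, hw⟩ | ⟨hned, hapd, hitd⟩
      · rw [hd] at hne; simp at hne
      · exact absurd hCd' hCd
      · -- a single leaf is removed
        rw [hw, lcount_singleton] at hl
        rw [hw, pcount_singleton] at hp
        have e1 : lcount s = lcount u + 1 := by omega
        have e2 : pcount s = pcount u := by omega
        rw [FF, if_pos hC, FF, if_pos hCu, e1, e2]
        exact AMove.leaf _ _
      · -- a path suffix is removed
        have hl0 : lcount (s \ u) = 0 := lcount_eq_zero hapd
        have hp0 : pcount (s \ u) = (s \ u).card := pcount_eq_card hapd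
        have e1 : lcount s = lcount u := by omega
        have e2 : pcount s = pcount u + (s \ u).card := by
          rw [if_neg (not_center_mem hapd)] at hdecd
          omega
        rw [FF, if_pos hC, FF, if_pos hCu, e1, e2]
        have := AMove.tail (N := N) (lcount u) (pcount u + (s \ u).card) ((s \ u).card)
          (by
            have : (s \ u).Nonempty := hne
            have := Finset.card_pos.2 this
            omega) hcard.2 (by omega)
        rwa [Nat.add_sub_cancel] at this
    · -- the center is removed
      have hCd : Sum.inl none ∈ s \ u := by simp [hC, hCu]
      have hgu : GoodF u := by
        rcases hcu with rfl | hcu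
        · exact Or.inl rfl
        · exact classify hcu
      rw [if_pos hCd] at hdecd
      rw [if_pos hC] at hdecs
      rw [if_neg hCu] at hdecu
      rcases hgu with hu | ⟨hCu', _⟩ | ⟨w, hw⟩ | ⟨hneu, hapu, hitu⟩
      · -- everything is removed
        subst hu
        have hl0 : lcount (∅ : Finset (VV tt kk)) = 0 := by simp [lcount]
        have hp0 : pcount (∅ : Finset (VV tt kk)) = 0 := by simp [pcount]
        rw [FF, if_pos hC, FF, if_neg (Finset.notMem_empty _), Finset.card_empty]
        have hpj : pcount s - pcount s = 0 := by omega
        have := AMove.clear (N := N) (lcount s) (pcount s) (pcount s) le_rfl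
          (by omega)
        rwa [hpj] at this
      · exact absurd hCu' hCu
      · -- a single leaf remains
        subst hw
        rw [lcount_singleton] at hl
        rw [pcount_singleton] at hp
        simp only [Finset.card_singleton] at hdecu
        rw [FF, if_pos hC, FF, if_neg hCu, Finset.card_singleton]
        have ha1 : 1 ≤ lcount s := by omega
        rw [show lcount s = (lcount s - 1) + 1 by omega]
        exact AMove.single _ _ (by omega)
      · -- a path suffix remains
        have hl0 : lcount u = 0 := lcount_eq_zero hapu
        have hpu : pcount u = u.card := pcount_eq_card hapu
        rw [FF, if_pos hC, FF, if_neg hCu]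
        have hple : pcount (s \ u) ≤ pcount s := by omega
        have := AMove.clear (N := N) (lcount s) (pcount s) (pcount (s \ u)) hple
          (by omega)
        rwa [show pcount s - pcount (s \ u) = u.card by omega] at this
  · -- s is a single leaf
    rcases Finset.subset_singleton_iff.1 hsub with rfl | rfl
    · -- everything removed
      have hd : ({Sum.inl (some w)} : Finset (VV tt kk)) \ ∅ = {Sum.inl (some w)} :=
        Finset.sdiff_empty
      rw [hd, Finset.card_singleton] at hcard
      rw [FF, if_neg (by simp), Finset.card_singleton, FF,
        if_neg (Finset.notMem_empty _), Finset.card_empty]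
      exact AMove.pmove 1 1 le_rfl hcard.2 le_rfl
    · rw [Finset.sdiff_self] at hne
      simp at hne
  · -- s is a path interval
    have hCs : Sum.inl none ∉ s := not_center_mem hap
    have hCu : Sum.inl none ∉ u := fun h => hCs (hsub h)
    have h1 : 1 ≤ (s \ u).card := Finset.card_pos.2 hne
    rw [FF, if_neg hCs, FF, if_neg hCu]
    have := AMove.pmove (N := N) s.card ((s \ u).card) h1 hcard.2 (by omega)
    rwa [show s.card - (s \ u).card = u.card by omega] at this

/-! ### Interval characterization -/

lemma pcount_eq_Ico {s : Finset (VV tt kk)} {b c : ℕ}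
    (h : ∀ x : Fin kk, Sum.inr x ∈ s ↔ b ≤ (x : ℕ) ∧ (x : ℕ) < b + c)
    (hck : b + c ≤ kk) : pcount s = c := by
  rw [← card_pset]
  have : pset s = Finset.Ico b (b + c) := by
    ext m
    rw [mem_pset, Finset.mem_Ico]
    constructor
    · rintro ⟨x, hx, rfl⟩
      exact (h x).1 hx
    · intro hm
      have hmk : m < kk := by omega
      exact ⟨⟨m, hmk⟩, (h ⟨m, hmk⟩).2 ⟨hm.1, hm.2⟩, rfl⟩
  rw [this, Nat.card_Ico]
  omega

lemma itv_char {s : Finset (VV tt kk)} (hne : s.Nonempty)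
    (hap : ∀ v ∈ s, ∃ x, v = Sum.inr x) (hit : itv s) :
    ∃ b, b + s.card ≤ kk ∧
      ∀ x : Fin kk, Sum.inr x ∈ s ↔ (b ≤ (x : ℕ) ∧ (x : ℕ) < b + s.card) := by
  have hTne : (pset s).Nonempty := by
    obtain ⟨v, hv⟩ := hne
    obtain ⟨x, rfl⟩ := hap v hv
    exact ⟨(x : ℕ), (mem_pset _).2 ⟨x, hv, rfl⟩⟩
  set b := (pset s).min' hTne with hb
  have hcardT : (pset s).card = s.card := by
    rw [card_pset, pcount_eq_card hap]
  have hTk : ∀ m ∈ pset s, m < kk := by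
    intro m hm
    obtain ⟨x, _, rfl⟩ := (mem_pset m).1 hm
    exact x.2
  have hitT : ∀ l m r, l ∈ pset s → r ∈ pset s → l ≤ m → m ≤ r → m ∈ pset s := by
    intro l m r hl hr h1 h2
    obtain ⟨x, hx, rfl⟩ := (mem_pset l).1 hl
    obtain ⟨z, hz, rfl⟩ := (mem_pset r).1 hr
    have hmk : m < kk := by have := z.2; omega
    exact (mem_pset m).2 ⟨⟨m, hmk⟩, hit x ⟨m, hmk⟩ z h1 h2 hx hz, rfl⟩
  have key : ∀ m, m ∈ pset s ↔ b ≤ m ∧ m < b + (pset s).card := by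
    intro m
    constructor
    · intro hm
      refine ⟨Finset.min'_le _ _ hm, ?_⟩
      have hsub : Finset.Icc b m ⊆ pset s := by
        intro l hl
        rw [Finset.mem_Icc] at hl
        exact hitT b l m (Finset.min'_mem _ _) hm hl.1 hl.2
      have := Finset.card_le_card hsub
      rw [Nat.card_Icc] at this
      omega
    · rintro ⟨h1, h2⟩
      by_contra hm
      have hsub : pset s ⊆ Finset.Ico b m := by
        intro l hl
        rw [Finset.mem_Ico]
        refine ⟨Finset.min'_le _ _ hl, ?_⟩
        rcases Nat.lt_or_ge l m with h3 | h3
        · exact h3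
        · exact absurd (hitT b m l (Finset.min'_mem _ _) hl h1 h3) hm
      have := Finset.card_le_card hsub
      rw [Nat.card_Ico] at this
      omega
  refine ⟨b, ?_, ?_⟩
  · have hc1 : 1 ≤ (pset s).card := Finset.card_pos.2 hTne
    have hmem := (key (b + (pset s).card - 1)).2 ⟨by omega, by omega⟩
    have := hTk _ hmem
    omega
  · intro x
    rw [← hcardT]
    constructor
    · intro hx
      exact (key (x : ℕ)).1 ((mem_pset _).2 ⟨x, hx, rfl⟩)
    · intro hx
      obtain ⟨x', hx', he⟩ := (mem_pset ((x : ℕ))).1 ((key (x : ℕ)).2 hx)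
      have : x' = x := Fin.ext he
      subst this
      exact hx'

/-! ### Abstract moves are realized by concrete moves -/

lemma amove_move {N : ℕ} (hN : 3 ≤ N) {s : Finset (VV tt kk)} (hg : GoodF s) {τ : AState}
    (hτ : AMove N (FF s) τ) :
    ∃ u, CsgMove (GG tt kk) (Set.Icc 1 N) s u ∧ GoodF u ∧ FF u = τ := by
  rcases hg with rfl | ⟨hC, hdc⟩ | ⟨w, rfl⟩ | ⟨hne', hap, hit⟩
  · rw [FF, if_neg (Finset.notMem_empty _), Finset.card_empty] at hτ
    cases hτ with
    | pmove m r h1 h2 h3 => omega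
  · -- s contains the center
    have hjk : pcount s ≤ kk := pcount_le_kk
    have hchar : ∀ x : Fin kk, Sum.inr x ∈ s ↔ (x : ℕ) < pcount s := pcount_char hdc
    have hdecs := card_decomp s
    rw [if_pos hC] at hdecs
    rw [FF, if_pos hC] at hτ
    generalize hA : lcount s = A at hτ
    generalize hJ : pcount s = J at hτ
    cases hτ with
    | tail a j r h1 h2 h3 =>
      subst hA; subst hJ
      set u := s.filter (fun v => isPb v = true → pval v < pcount s - r) with hu
      have memu : ∀ x : Fin kk, Sum.inr x ∈ u ↔ (x : ℕ) < pcount s - r := by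
        intro x
        rw [hu, Finset.mem_filter]
        constructor
        · rintro ⟨hx, h⟩
          have := h (by simp [isPb])
          simpa [pval] using this
        · intro h
          refine ⟨(hchar x).2 (by omega), fun _ => ?_⟩
          simpa [pval] using h
      have memuC : Sum.inl none ∈ u := Finset.mem_filter.2 ⟨hC, by simp [isPb]⟩
      have hapd : ∀ v ∈ s \ u, ∃ x, v = Sum.inr x := by
        intro v hv
        rw [Finset.mem_sdiff] at hv
        match v with
        | Sum.inl none => exact absurd memuC hv.2
        | Sum.inl (some w) =>
          exact absurd (Finset.mem_filter.2 ⟨hv.1, by simp [isPb]⟩) hv.2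
        | Sum.inr x => exact ⟨x, rfl⟩
      have memd : ∀ x : Fin kk, Sum.inr x ∈ s \ u ↔
          (pcount s - r ≤ (x : ℕ) ∧ (x : ℕ) < pcount s) := by
        intro x
        rw [Finset.mem_sdiff, hchar x, memu x]
        omega
      have hsubu : u ⊆ s := Finset.filter_subset _ _
      have hpcu : pcount u = pcount s - r := pcount_eq memu (by omega)
      have hlcd0 : lcount (s \ u) = 0 := lcount_eq_zero hapd
      have hlcu : lcount u = lcount s := by
        have := lcount_sdiff hsubu; omega
      have hpcd := pcount_sdiff hsubu
      have hcdd := card_decomp (s \ u)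
      rw [if_neg (not_center_mem hapd)] at hcdd
      have hcardd : (s \ u).card = r := by omega
      have hdne : (s \ u).Nonempty :=
        ⟨Sum.inr ⟨pcount s - 1, by omega⟩, (memd ⟨pcount s - 1, by omega⟩).2
          ⟨show pcount s - r ≤ pcount s - 1 by omega, show pcount s - 1 < pcount s by omega⟩⟩
      have hdcu : dcl u := fun x y hyx hx => (memu y).2 (by have := (memu x).1 hx; omega)
      refine ⟨u, ⟨hsubu, hdne, ?_, ?_, Or.inr (connOn_center memuC hdcu)⟩,
        Or.inr (Or.inl ⟨memuC, hdcu⟩), ?_⟩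
      · rw [Set.mem_Icc, hcardd]; omega
      · refine connOn_path hdne hapd ?_
        intro x y z hxy hyz hx hz
        have bx := (memd x).1 hx
        have bz := (memd z).1 hz
        exact (memd y).2 ⟨by omega, by omega⟩
      · rw [FF, if_pos memuC, hpcu, hlcu]
    | leaf a j =>
      subst hJ
      have hlpos : 0 < lcount s := by omega
      obtain ⟨v, hv⟩ := Finset.card_pos.1 hlpos
      rw [Finset.mem_filter] at hv
      obtain ⟨w, rfl⟩ := (isLb_iff v).1 hv.2
      have hvs := hv.1
      have hd : s \ s.erase (Sum.inl (some w)) = {Sum.inl (some w)} := by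
        ext v'
        rw [Finset.mem_sdiff, Finset.mem_erase, Finset.mem_singleton]
        constructor
        · rintro ⟨hv1, hv2⟩
          by_contra hne2
          exact hv2 ⟨hne2, hv1⟩
        · rintro rfl
          exact ⟨hvs, fun h => h.1 rfl⟩
      have memuC : Sum.inl none ∈ s.erase (Sum.inl (some w)) := Finset.mem_erase.2 ⟨by simp, hC⟩
      have hdcu : dcl (s.erase (Sum.inl (some w))) := fun x y hyx hx =>
        Finset.mem_erase.2 ⟨by simp, hdc _ _ hyx (Finset.mem_erase.1 hx).2⟩
      have hl := lcount_sdiff (Finset.erase_subset (Sum.inl (some w)) s)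
      have hp := pcount_sdiff (Finset.erase_subset (Sum.inl (some w)) s)
      rw [hd, lcount_singleton] at hl
      rw [hd, pcount_singleton] at hp
      refine ⟨s.erase (Sum.inl (some w)), ⟨Finset.erase_subset _ _, ?_, ?_, ?_,
        Or.inr (connOn_center memuC hdcu)⟩, Or.inr (Or.inl ⟨memuC, hdcu⟩), ?_⟩
      · rw [hd]; exact Finset.singleton_nonempty _
      · rw [hd, Finset.card_singleton, Set.mem_Icc]; omega
      · rw [hd, Finset.coe_singleton]; exact connOn_singleton _ _
      · rw [FF, if_pos memuC, show lcount (s.erase (Sum.inl (some w))) = a by omega,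
          show pcount (s.erase (Sum.inl (some w))) = pcount s by omega]
    | clear a j p hp hle =>
      subst hA; subst hJ
      set u := s.filter (fun v => isPb v = true ∧ p ≤ pval v) with hu
      have memu : ∀ x : Fin kk, Sum.inr x ∈ u ↔ ((x : ℕ) < pcount s ∧ p ≤ (x : ℕ)) := by
        intro x
        rw [hu, Finset.mem_filter, hchar x]
        simp only [isPb, pval]
        tauto
      have hapu : ∀ v ∈ u, ∃ x, v = Sum.inr x := by
        intro v hv
        rw [hu, Finset.mem_filter] at hv
        exact (isPb_iff v).1 hv.2.1
      have hCu : Sum.inl none ∉ u := not_center_mem hapu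
      have memdC : Sum.inl none ∈ s \ u := Finset.mem_sdiff.2 ⟨hC, hCu⟩
      have memdx : ∀ x : Fin kk, Sum.inr x ∈ s \ u ↔ (x : ℕ) < p := by
        intro x
        rw [Finset.mem_sdiff, hchar x, memu x]
        omega
      have hdcd : dcl (s \ u) := fun x y hyx hx =>
        (memdx y).2 (by have := (memdx x).1 hx; omega)
      have hlcu : lcount u = 0 := lcount_eq_zero hapu
      have hl := lcount_sdiff (Finset.filter_subset (fun v => isPb v = true ∧ p ≤ pval v) s)
      have hp2 := pcount_sdiff (Finset.filter_subset (fun v => isPb v = true ∧ p ≤ pval v) s)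
      rw [← hu] at hl hp2
      have hpcd : pcount (s \ u) = p := pcount_eq memdx (by omega)
      have hpcu2 : pcount u = u.card := pcount_eq_card hapu
      have hcdd := card_decomp (s \ u)
      rw [if_pos memdC] at hcdd
      have hgu : (u = ∅ ∨ ConnOn (GG tt kk) ↑u) ∧ GoodF u := by
        rcases u.eq_empty_or_nonempty with he | hneu
        · exact ⟨Or.inl he, he ▸ Or.inl rfl⟩
        · have hitu : itv u := fun x y z hxy hyz hx hz =>
            (memu y).2 (by
              have := (memu x).1 hx
              have := (memu z).1 hz
              omega)
          exact ⟨Or.inr (connOn_path hneu hapu hitu),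
            Or.inr (Or.inr (Or.inr ⟨hneu, hapu, hitu⟩))⟩
      refine ⟨u, ⟨Finset.filter_subset _ _, ⟨_, memdC⟩, ?_, connOn_center memdC hdcd,
        hgu.1⟩, hgu.2, ?_⟩
      · rw [Set.mem_Icc]
        constructor <;> omega
      · rw [FF, if_neg hCu, show u.card = pcount s - p by omega]
    | single a j hcond =>
      subst hJ
      have hlpos : 0 < lcount s := by omega
      obtain ⟨v, hv⟩ := Finset.card_pos.1 hlpos
      rw [Finset.mem_filter] at hv
      obtain ⟨w, rfl⟩ := (isLb_iff v).1 hv.2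
      have hvs := hv.1
      have hCd : Sum.inl none ∈ s \ ({Sum.inl (some w)} : Finset (VV tt kk)) :=
        Finset.mem_sdiff.2 ⟨hC, by simp⟩
      have hdcd : dcl (s \ ({Sum.inl (some w)} : Finset (VV tt kk))) := fun x y hyx hx =>
        Finset.mem_sdiff.2 ⟨hdc _ _ hyx (Finset.mem_sdiff.1 hx).1, by simp⟩
      have hcd : (s \ ({Sum.inl (some w)} : Finset (VV tt kk))).card = s.card - 1 := by
        rw [Finset.card_sdiff_of_subset (Finset.singleton_subset_iff.2 hvs), Finset.card_singleton]
      have hconnu : ConnOn (GG tt kk) ↑({Sum.inl (some w)} : Finset (VV tt kk)) := by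
        rw [Finset.coe_singleton]
        exact connOn_singleton _ _
      refine ⟨{Sum.inl (some w)}, ⟨Finset.singleton_subset_iff.2 hvs, ⟨_, hCd⟩, ?_,
        connOn_center hCd hdcd, Or.inr hconnu⟩, Or.inr (Or.inr (Or.inl ⟨w, rfl⟩)), ?_⟩
      · rw [Set.mem_Icc, hcd]; omega
      · rw [FF, if_neg (by simp), Finset.card_singleton]
  · -- s is a single leaf
    rw [FF, if_neg (by simp), Finset.card_singleton] at hτ
    cases hτ with
    | pmove m r h1 h2 h3 =>
      have hr : r = 1 := by omega
      subst hr
      refine ⟨∅, ⟨Finset.empty_subset _, ?_, ?_, ?_, Or.inl rfl⟩, Or.inl rfl, ?_⟩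
      · rw [Finset.sdiff_empty]; exact Finset.singleton_nonempty _
      · rw [Finset.sdiff_empty, Finset.card_singleton, Set.mem_Icc]; omega
      · rw [Finset.sdiff_empty, Finset.coe_singleton]; exact connOn_singleton _ _
      · rw [FF, if_neg (Finset.notMem_empty _), Finset.card_empty]
  · -- s is a path interval
    obtain ⟨b, hbk, hchar⟩ := itv_char hne' hap hit
    have hCs := not_center_mem hap
    have hcpos : 1 ≤ s.card := Finset.card_pos.2 hne'
    rw [FF, if_neg hCs] at hτ
    generalize hM : s.card = M at hτ
    cases hτ with
    | pmove m r h1 h2 h3 =>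
      subst hM
      set u := s.filter (fun v => pval v < b + (s.card - r)) with hu
      have memu : ∀ x : Fin kk, Sum.inr x ∈ u ↔
          (b ≤ (x : ℕ) ∧ (x : ℕ) < b + (s.card - r)) := by
        intro x
        rw [hu, Finset.mem_filter, hchar x]
        simp only [pval]
        omega
      have hapu : ∀ v ∈ u, ∃ x, v = Sum.inr x := fun v hv =>
        hap v (Finset.mem_filter.1 (hu ▸ hv)).1
      have hapd : ∀ v ∈ s \ u, ∃ x, v = Sum.inr x := fun v hv =>
        hap v (Finset.mem_sdiff.1 hv).1
      have memd : ∀ x : Fin kk, Sum.inr x ∈ s \ u ↔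
          (b + (s.card - r) ≤ (x : ℕ) ∧ (x : ℕ) < b + s.card) := by
        intro x
        rw [Finset.mem_sdiff, hchar x, memu x]
        omega
      have hCu : Sum.inl none ∉ u := not_center_mem hapu
      have hdne : (s \ u).Nonempty :=
        ⟨Sum.inr ⟨b + s.card - 1, by omega⟩, (memd ⟨b + s.card - 1, by omega⟩).2
          ⟨show b + (s.card - r) ≤ b + s.card - 1 by omega,
           show b + s.card - 1 < b + s.card by omega⟩⟩
      have hpcu : pcount u = s.card - r := pcount_eq_Ico memu (by omega)
      have hpcu2 : pcount u = u.card := pcount_eq_card hapu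
      have hcards := Finset.card_sdiff_add_card_eq_card (Finset.filter_subset
        (fun v => pval v < b + (s.card - r)) s)
      have hgu : (u = ∅ ∨ ConnOn (GG tt kk) ↑u) ∧ GoodF u := by
        rcases u.eq_empty_or_nonempty with he | hneu
        · exact ⟨Or.inl he, he ▸ Or.inl rfl⟩
        · have hitu : itv u := fun x y z hxy hyz hx hz =>
            (memu y).2 (by
              have := (memu x).1 hx
              have := (memu z).1 hz
              omega)
          exact ⟨Or.inr (connOn_path hneu hapu hitu),
            Or.inr (Or.inr (Or.inr ⟨hneu, hapu, hitu⟩))⟩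
      refine ⟨u, ⟨Finset.filter_subset _ _, hdne, ?_, ?_, hgu.1⟩, hgu.2, ?_⟩
      · rw [Set.mem_Icc]
        rw [← hu] at hcards
        constructor <;> omega
      · refine connOn_path hdne hapd ?_
        intro x y z hxy hyz hx hz
        have bx := (memd x).1 hx
        have bz := (memd z).1 hz
        exact (memd y).2 ⟨by omega, by omega⟩
      · rw [FF, if_neg hCu, show u.card = s.card - r by rw [← hu] at hcards; omega]

/-! ### The transfer theorem -/

lemma move_card_lt {V : Type*} [DecidableEq V] {G : SimpleGraph V} {L : Set ℕ}
    {s u : Finset V} (hmv : CsgMove G L s u) : u.card < s.card := by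
  obtain ⟨x, hx⟩ := hmv.2.1
  rw [Finset.mem_sdiff] at hx
  exact Finset.card_lt_card ((Finset.ssubset_iff_of_subset hmv.1).2 ⟨x, hx.1, hx.2⟩)

lemma csgGrundy_eq {V : Type*} [DecidableEq V] (G : SimpleGraph V) (L : Set ℕ)
    (s : Finset V) :
    csgGrundy G L s = mex (csgGrundy G L '' {u | CsgMove G L s u}) := by
  rw [csgGrundy]
  congr 1
  ext v
  constructor
  · rintro ⟨⟨u, hu⟩, rfl⟩
    exact ⟨u, hu, rfl⟩
  · rintro ⟨u, hu, rfl⟩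
    exact ⟨⟨u, hu⟩, rfl⟩

lemma transfer {N : ℕ} (hN : 3 ≤ N) :
    ∀ n (s : Finset (VV tt kk)), s.card ≤ n → GoodF s →
      csgGrundy (GG tt kk) (Set.Icc 1 N) s = aG N (FF s) := by
  intro n
  induction n with
  | zero =>
    intro s hcard hg
    have hs : s = ∅ := Finset.card_eq_zero.1 (by omega)
    subst hs
    rw [csgGrundy_eq, FF, if_neg (Finset.notMem_empty _), Finset.card_empty,
      aG_path (by omega), Nat.zero_mod]
    have : csgGrundy (GG tt kk) (Set.Icc 1 N) ''
        {u | CsgMove (GG tt kk) (Set.Icc 1 N) (∅ : Finset (VV tt kk)) u} = ∅ := by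
      rw [Set.image_eq_empty, Set.eq_empty_iff_forall_notMem]
      rintro u ⟨hsub, hne, _⟩
      rw [Finset.empty_sdiff] at hne
      obtain ⟨x, hx⟩ := hne
      exact absurd hx (Finset.notMem_empty x)
    rw [this]
    rw [mex, Set.eq_empty_iff_forall_notMem] at *
    simp [mex]
  | succ n ih =>
    intro s hcard hg
    rw [csgGrundy_eq, aG_eq]
    congr 1
    ext v
    constructor
    · rintro ⟨u, hu, rfl⟩
      have hgu : GoodF u := by
        rcases hu.2.2.2.2 with rfl | hc
        · exact Or.inl rfl
        · exact classify hc
      have hcu : u.card ≤ n := by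
        have := move_card_lt hu
        omega
      exact ⟨FF u, move_amove hg hu, (ih u hcu hgu).symm⟩
    · rintro ⟨τ, hτ, rfl⟩
      obtain ⟨u, hmv, hgu, rfl⟩ := amove_move hN hg hτ
      have hcu : u.card ≤ n := by
        have := move_card_lt hmv
        omega
      exact ⟨u, hmv, ih u hcu hgu⟩

lemma transfer_univ {N : ℕ} (hN : 3 ≤ N) :
    csgGrundy (GG tt kk) (Set.Icc 1 N) Finset.univ = aG N (.pos tt kk) := by
  have hg : GoodF (Finset.univ : Finset (VV tt kk)) :=
    Or.inr (Or.inl ⟨Finset.mem_univ _, fun x y _ _ => Finset.mem_univ _⟩)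
  rw [transfer hN Finset.univ.card Finset.univ le_rfl hg, FF,
    if_pos (Finset.mem_univ _), lcount_univ, pcount_univ]

end Concrete

/-- For CSG({1,…,N}) with N ≥ 3 on the star with `t` leaves with a path of `k`
vertices appended at its center, the Grundy value only depends on k mod (N+1):
the Grundy sequence in `k` is purely periodic with period N+1. -/
theorem stmt8 (N t : ℕ) (hN : 3 ≤ N) (ht : 1 ≤ t) (k : ℕ) :
    csgGrundy (appendPath (subdividedStar fun _ : Fin t => 1) none k)
      (Set.Icc 1 N) Finset.univ =
    csgGrundy (appendPath (subdividedStar fun _ : Fin t => 1) none (k % (N + 1)))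
      (Set.Icc 1 N) Finset.univ := by
  have h1 := transfer_univ (tt := t) (kk := k) hN
  have h2 := transfer_univ (tt := t) (kk := k % (N + 1)) hN
  rw [h1, h2]
  exact aG_mod hN t k
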